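/- Let A and B be finite sequences of reals and δ > 0, and let 0 ≤ i ≤ n be a split index for A. Then the maximum length of a δ-almost increasing common subsequence of A and B equals the maximum, over all j with 0 ≤ j ≤ m and all pairs (S', S'') where S' is a δ-almost increasing common subsequence of A[1..i] and B[1..j], S'' is a δ-almost increasing common subsequence of A[i+1..n] and B[j+1..m], and (either one of S', S'' is empty or max(S') < min(S'') + δ), of |S'| + |S''|. -/

import Mathlib

open List

def DeltaAlmostIncreasing (δ : ℝ) (l : List ℝ) : Prop :=
  l.Pairwise fun a b => b + δ > a

private lemma split_sublist {α : Type*} (l₁ l₂ B : List α) (h : (l₁ ++ l₂) <+ B) :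
    ∃ j ≤ B.length, l₁ <+ B.take j ∧ l₂ <+ B.drop j := by
  induction B generalizing l₁ l₂ with
  | nil =>
    have := List.sublist_nil.mp h
    rcases List.append_eq_nil_iff.mp this with ⟨rfl, rfl⟩
    exact ⟨0, by simp, by simp, by simp⟩
  | cons b B' ih =>
    rcases List.sublist_cons_iff.mp h with h' | ⟨r, hr, hr'⟩
    · obtain ⟨j, hj, h1, h2⟩ := ih l₁ l₂ h'
      refine ⟨j + 1, by simpa using hj, ?_, by simpa using h2⟩
      simpa using h1.cons b
    · cases l₁ with
      | nil =>
        refine ⟨0, by simp, by simp, ?_⟩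
        simp only [List.nil_append] at hr
        subst hr
        simpa using hr'.cons_cons b
      | cons a t =>
        simp only [List.cons_append, List.cons.injEq] at hr
        obtain ⟨rfl, hr⟩ := hr
        obtain ⟨j, hj, h1, h2⟩ := ih t l₂ (hr ▸ hr')
        refine ⟨j + 1, by simpa using hj, ?_, by simpa using h2⟩
        simpa using h1.cons_cons a

private lemma max_eq {l : List ℝ} (h : l ≠ []) : ∃ m ∈ l, l.maximum = m ∧ l.maximum.unbotD 0 = m := by
  obtain ⟨m, hm⟩ := WithBot.ne_bot_iff_exists.mp (List.maximum_ne_bot_of_ne_nil h)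
  exact ⟨m, List.maximum_mem hm.symm, hm.symm, by rw [← hm]; rfl⟩

private lemma min_eq {l : List ℝ} (h : l ≠ []) : ∃ m ∈ l, l.minimum = m ∧ l.minimum.untopD 0 = m := by
  obtain ⟨m, hm⟩ := WithTop.ne_top_iff_exists.mp (List.minimum_ne_top_of_ne_nil h)
  exact ⟨m, List.minimum_mem hm.symm, hm.symm, by rw [← hm]; rfl⟩

/-- Lemma 2: for any split index 0 ≤ i ≤ n, the maximum length of a
δ-almost increasing common subsequence of A and B equals the maximum over 0 ≤ j ≤ m and
pairs (S', S'') of compatible δ-a.i. common subsequences of the corresponding prefix/suffix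
pairs of |S'| + |S''|. -/
theorem stmt_8 (δ : ℝ) (hδ : 0 < δ) (A B : List ℝ) (i : ℕ) (hi : i ≤ A.length) :
    sSup {k : ℕ | ∃ S : List ℝ, S.length = k ∧ S <+ A ∧ S <+ B ∧
        DeltaAlmostIncreasing δ S} =
    sSup {k : ℕ | ∃ j ≤ B.length, ∃ S' S'' : List ℝ,
        S' <+ A.take i ∧ S' <+ B.take j ∧ DeltaAlmostIncreasing δ S' ∧
        S'' <+ A.drop i ∧ S'' <+ B.drop j ∧ DeltaAlmostIncreasing δ S'' ∧
        (S' = [] ∨ S'' = [] ∨ S'.maximum.unbotD 0 < S''.minimum.untopD 0 + δ) ∧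
        k = S'.length + S''.length} := by
  congr 1
  ext k
  simp only [Set.mem_setOf_eq]
  constructor
  · rintro ⟨S, rfl, hSA, hSB, hS⟩
    rw [← List.take_append_drop i A] at hSA
    obtain ⟨S', S'', rfl, h1, h2⟩ := List.sublist_append_iff.mp hSA
    obtain ⟨j, hj, hb1, hb2⟩ := split_sublist S' S'' B hSB
    rw [DeltaAlmostIncreasing, List.pairwise_append] at hS
    obtain ⟨hp1, hp2, hrel⟩ := hS
    refine ⟨j, hj, S', S'', h1, hb1, hp1, h2, hb2, hp2, ?_, by simp⟩
    by_cases he1 : S' = []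
    · exact Or.inl he1
    by_cases he2 : S'' = []
    · exact Or.inr (Or.inl he2)
    refine Or.inr (Or.inr ?_)
    obtain ⟨m, hm_mem, _, hm'⟩ := max_eq he1
    obtain ⟨m', hm'_mem, _, hmm'⟩ := min_eq he2
    rw [hm', hmm']
    have := hrel m hm_mem m' hm'_mem
    linarith
  · rintro ⟨j, hj, S', S'', h1, h2, hd1, h3, h4, hd2, hc, rfl⟩
    refine ⟨S' ++ S'', by simp, ?_, ?_, ?_⟩
    · have := h1.append h3
      rwa [List.take_append_drop] at this
    · have := h2.append h4
      rwa [List.take_append_drop] at this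
    · rw [DeltaAlmostIncreasing, List.pairwise_append]
      refine ⟨hd1, hd2, fun a ha b hb => ?_⟩
      rcases hc with rfl | rfl | hc
      · simp at ha
      · simp at hb
      · obtain ⟨m, hm_mem, hm, hm'⟩ := max_eq (List.ne_nil_of_mem ha)
        obtain ⟨m', hm'_mem, hmm, hmm'⟩ := min_eq (List.ne_nil_of_mem hb)
        rw [hm', hmm'] at hc
        have ha' : a ≤ m := List.le_maximum_of_mem ha hm
        have hb' : m' ≤ b := List.minimum_le_of_mem hb hmm
        show b + δ > a
        linarith
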